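/- arXiv:2112.15466 — 4 statements merged into one kernel-verified Lean document; each statement's English description precedes it below -/
import Mathlib

section
/- Let a be a basis vector of F_{q^m} over F_q (its m components form an F_q-basis of F_{q^m}) and M = Mr_k(a) the k×m Moore matrix it generates, with k ≤ m. Then for any k×n Moore matrix M' over F_{q^m}, there exists a matrix Q ∈ M_{m,n}(F_q) such that M' = MQ. -/
/-- The `k × n` Moore matrix of a vector `a`, with `(i,j)` entry `a j ^ q ^ i`. -/
def mooreMatrix (q k : ℕ) {n : ℕ} {K : Type*} [Field K] (a : Fin n → K) :
    Matrix (Fin k) (Fin n) K :=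
  Matrix.of fun i j => a j ^ q ^ (i : ℕ)

/-- Moore matrix decomposition: if `a` is a basis vector of `F_{q^m}` over `F_q` and
`M = Mr_k(a)` is the `k × m` Moore matrix it generates (`k ≤ m`), then any `k × n` Moore matrix
`M'` can be written as `M' = M Q` for some `Q ∈ M_{m,n}(F_q)`. -/
theorem moore_decomposition (Fq K : Type*) [Field Fq] [Fintype Fq] [Field K] [Algebra Fq K]
    (m k n : ℕ) (hk : k ≤ m) (a : Fin m → K)
    (ha : LinearIndependent Fq a) (hspan : Submodule.span Fq (Set.range a) = ⊤)
    (b : Fin n → K) :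
    ∃ Q : Matrix (Fin m) (Fin n) Fq,
      mooreMatrix (Fintype.card Fq) k b
        = mooreMatrix (Fintype.card Fq) k a * Q.map (algebraMap Fq K) := by
  set p := ringChar Fq with hp
  haveI hch : CharP Fq p := ringChar.charP Fq
  haveI hpp : Fact p.Prime := ⟨CharP.char_is_prime Fq p⟩
  obtain ⟨s, hcard⟩ := FiniteField.card Fq p
  haveI : CharP K p := charP_of_injective_algebraMap (algebraMap Fq K).injective p
  haveI : ExpChar K p := ExpChar.prime hpp.out
  -- the basis
  let B : Module.Basis (Fin m) Fq K := Module.Basis.mk ha (by rw [hspan])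
  refine ⟨Matrix.of fun t j => B.repr (b j) t, ?_⟩
  ext i j
  simp only [mooreMatrix, Matrix.mul_apply, Matrix.of_apply, Matrix.map_apply]
  have hb : b j = ∑ t, algebraMap Fq K (B.repr (b j) t) * a t := by
    conv_lhs => rw [← B.sum_repr (b j)]
    simp [Algebra.smul_def, B, Module.Basis.mk_apply]
  conv_lhs => rw [hb]
  have hq : (Fintype.card Fq) ^ (i : ℕ) = p ^ ((s : ℕ) * i) := by
    rw [hcard.2, ← pow_mul]
  rw [hq, sum_pow_char_pow]
  refine Finset.sum_congr rfl fun t _ => ?_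
  rw [mul_pow, ← map_pow, ← hq, FiniteField.pow_card_pow, mul_comm]
end

section
/- Let G = Gab_{n,k}(g) be an [n,k] Gabidulin code over F_{q^m} with generating vector g, and let l ≤ min{k−1, n−k} be a positive integer. Then the intersection G ∩ G^{[l]} is the [n, k−l] Gabidulin code with generating vector g^{[l]}: G ∩ G^{[l]} = Gab_{n,k-l}(g^{[l]}). -/
/-- The `[n,k]` Gabidulin code generated by `g`: the row space of the Moore matrix `Mr_k(g)`. -/
def gabidulinCode (q k : ℕ) {n : ℕ} {K : Type*} [Field K] (g : Fin n → K) :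
    Submodule K (Fin n → K) :=
  Submodule.span K (Set.range fun i => mooreMatrix q k g i)

open Polynomial Submodule

/-- There is a ring homomorphism of `K` raising to the power `q^e`, `q = |Fq|`. -/
lemma exists_frob (Fq K : Type*) [Field Fq] [Fintype Fq] [Field K] [Algebra Fq K] (e : ℕ) :
    ∃ φ : K →+* K, ∀ x, φ x = x ^ (Fintype.card Fq) ^ e := by
  set p := ringChar Fq with hpdef
  obtain ⟨s, hp, hFq⟩ := FiniteField.card Fq p
  haveI := Fact.mk hp
  haveI : CharP K p := charP_of_injective_algebraMap (algebraMap Fq K).injective p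
  haveI : ExpChar K p := .prime hp
  refine ⟨iterateFrobenius K p (s * e), fun x => ?_⟩
  rw [iterateFrobenius_def, hFq, ← pow_mul]

lemma algebraMap_pow_card_pow (Fq : Type*) {K : Type*} [Field Fq] [Fintype Fq] [Field K]
    [Algebra Fq K] (e : ℕ) (a : Fq) :
    (algebraMap Fq K a) ^ (Fintype.card Fq) ^ e = algebraMap Fq K a := by
  rw [← map_pow, FiniteField.pow_card_pow]

/-- Rows of the full `n × n` Moore matrix of a linearly independent vector are
linearly independent over `K`. -/
lemma moore_linearIndependent {Fq K : Type*} [Field Fq] [Fintype Fq] [Field K] [Algebra Fq K]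
    [Fintype K] {n : ℕ} (g : Fin n → K) (hg : LinearIndependent Fq g) :
    LinearIndependent K
      (fun i : Fin n => (fun j => g j ^ (Fintype.card Fq) ^ (i : ℕ) : Fin n → K)) := by
  classical
  set q := Fintype.card Fq with hqdef
  have hq : 1 < q := Fintype.one_lt_card
  obtain ⟨F, hF⟩ : ∃ F : ℕ → (K →+* K), ∀ e x, F e x = x ^ q ^ e := by
    choose F hF using fun e : ℕ => exists_frob Fq K e
    exact ⟨F, hF⟩
  rw [Fintype.linearIndependent_iff]
  intro c hc i
  have hn : 0 < n := i.pos
  set P : K[X] := ∑ i : Fin n, C (c i) * X ^ q ^ (i : ℕ) with hPdef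
  have hgj : ∀ j, P.eval (g j) = 0 := by
    intro j
    have h := congrFun hc j
    simp only [Finset.sum_apply, Pi.smul_apply, smul_eq_mul, Pi.zero_apply] at h
    simpa [P, eval_finset_sum] using h
  have hadd : ∀ y z : K, P.eval (y + z) = P.eval y + P.eval z := by
    intro y z
    simp only [P, eval_finset_sum, eval_mul, eval_C, eval_pow, eval_X,
      ← Finset.sum_add_distrib]
    refine Finset.sum_congr rfl fun i' _ => ?_
    rw [← hF (i' : ℕ) y, ← hF (i' : ℕ) z, ← hF (i' : ℕ) (y + z), map_add, mul_add]
  have hsmul : ∀ (a : Fq) (y : K), P.eval (a • y) = a • P.eval y := by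
    intro a y
    simp only [P, eval_finset_sum, eval_mul, eval_C, eval_pow, eval_X, Algebra.smul_def,
      Finset.mul_sum]
    refine Finset.sum_congr rfl fun i' _ => ?_
    rw [mul_pow, algebraMap_pow_card_pow]
    ring
  let L : K →ₗ[Fq] K :=
    { toFun := fun y => P.eval y
      map_add' := hadd
      map_smul' := hsmul }
  have hspan : Submodule.span Fq (Set.range g) ≤ LinearMap.ker L := by
    rw [Submodule.span_le]
    rintro _ ⟨j, rfl⟩
    exact LinearMap.mem_ker.mpr (hgj j)
  have hP0 : P = 0 := by
    by_contra hP
    set S : Submodule Fq K := Submodule.span Fq (Set.range g) with hS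
    have hdeg : P.natDegree ≤ q ^ (n - 1) := by
      refine natDegree_sum_le_of_forall_le _ _ fun i' _ => ?_
      refine (natDegree_C_mul_le _ _).trans ?_
      rw [natDegree_X_pow]
      exact Nat.pow_le_pow_right (le_of_lt hq) (by omega)
    have hcardS : Fintype.card S = q ^ n := by
      rw [Module.card_eq_pow_finrank (K := Fq), finrank_span_eq_card hg, Fintype.card_fin]
    have hsub : (S : Set K).toFinset ⊆ P.roots.toFinset := by
      intro y hy
      rw [Set.mem_toFinset] at hy
      rw [Multiset.mem_toFinset, mem_roots hP]
      exact hspan hy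
    have h1 : (S : Set K).toFinset.card = q ^ n := by
      rw [Set.toFinset_card, ← hcardS]
      exact Fintype.card_congr (Equiv.refl _)
    have h2 : P.roots.toFinset.card ≤ q ^ (n - 1) :=
      (Multiset.toFinset_card_le _).trans ((Polynomial.card_roots' P).trans hdeg)
    have := (Finset.card_le_card hsub)
    rw [h1] at this
    have hlt : q ^ (n - 1) < q ^ n := Nat.pow_lt_pow_right hq (by omega)
    omega
  have hco := congrArg (fun Q : K[X] => Q.coeff (q ^ (i : ℕ))) hP0
  simp only [P, finset_sum_coeff, coeff_C_mul, coeff_X_pow, coeff_zero, mul_ite, mul_one,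
    mul_zero] at hco
  rw [Finset.sum_eq_single i] at hco
  · simpa using hco
  · intro b _ hb
    rw [if_neg]
    intro h
    exact hb (Fin.ext (Nat.pow_right_injective hq h.symm))
  · intro h
    exact absurd (Finset.mem_univ i) h

/-- Intersection of spans of subfamilies of a linearly independent family. -/
lemma mem_span_image_inter {R M ι : Type*} [Field R] [AddCommGroup M] [Module R M]
    {v : ι → M} (hv : LinearIndependent R v) (s t : Set ι) {x : M}
    (hxs : x ∈ span R (v '' s)) (hxt : x ∈ span R (v '' t)) :
    x ∈ span R (v '' (s ∩ t)) := by
  classical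
  have h1 : span R (v '' s) ≤ span R (v '' (s ∩ t)) ⊔ span R (v '' (s \ t)) := by
    rw [← Submodule.span_union, ← Set.image_union]
    refine Submodule.span_mono (Set.image_mono ?_)
    intro a ha
    by_cases h : a ∈ t
    · exact Or.inl ⟨ha, h⟩
    · exact Or.inr ⟨ha, h⟩
  obtain ⟨y, hy, z, hz, hxyz⟩ := Submodule.mem_sup.mp (h1 hxs)
  have hzt : z ∈ span R (v '' t) := by
    have hz' : z = x - y := by rw [← hxyz, add_sub_cancel_left]
    rw [hz']
    exact Submodule.sub_mem _ hxt
      (Submodule.span_mono (Set.image_mono Set.inter_subset_right) hy)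
  have hz0 : z = 0 := by
    have hd := hv.disjoint_span_image (s := s \ t) (t := t) Set.disjoint_sdiff_left
    exact Submodule.disjoint_def.mp hd z hz hzt
  rw [← hxyz, hz0, add_zero]
  exact hy

/-- Let `G = Gab_{n,k}(g)` be an `[n,k]` Gabidulin code over `F_{q^m}` with generating vector
`g`, and let `0 < l ≤ min {k-1, n-k}`.  Then `G ∩ G^{[l]} = Gab_{n,k-l}(g^{[l]})`. -/
theorem gabidulin_inter_frobenius (Fq K : Type*) [Field Fq] [Fintype Fq] [Field K]
    [Algebra Fq K] [Fintype K] (m n k l : ℕ)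
    (hcard : Fintype.card K = Fintype.card Fq ^ m)
    (hk : 0 < k) (hkn : k ≤ n) (hnm : n ≤ m)
    (hl : 0 < l) (hlmin : l ≤ min (k - 1) (n - k))
    (g : Fin n → K) (hg : LinearIndependent Fq g) :
    (↑(gabidulinCode (Fintype.card Fq) k g) ∩
        {x : Fin n → K | ∃ c ∈ gabidulinCode (Fintype.card Fq) k g,
          x = fun j => c j ^ Fintype.card Fq ^ l} : Set (Fin n → K))
      = ↑(gabidulinCode (Fintype.card Fq) (k - l)
          (fun j => g j ^ Fintype.card Fq ^ l)) := by
  classical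
  set q := Fintype.card Fq with hqdef
  have hlk : l < k := by omega
  have hkln : k + l ≤ n := by omega
  obtain ⟨φ, hφ⟩ := exists_frob Fq K l
  rw [← hqdef] at hφ
  have hφsurj : Function.Surjective φ :=
    (Finite.injective_iff_surjective.mp φ.injective)
  set ψ : K → K := Function.surjInv hφsurj with hψdef
  have hψ : ∀ x, φ (ψ x) = x := fun x => Function.surjInv_eq hφsurj x
  set v : Fin n → (Fin n → K) := fun i => (fun j => g j ^ q ^ (i : ℕ)) with hvdef
  have hv : LinearIndependent K v := moore_linearIndependent g hg
  -- window sets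
  let win : ℕ → ℕ → Set (Fin n) := fun a k' => {i : Fin n | a ≤ (i : ℕ) ∧ (i : ℕ) < a + k'}
  have hwin_range : ∀ (a k' : ℕ), a + k' ≤ n →
      (Set.range fun i : Fin k' => (fun j => g j ^ q ^ (a + (i : ℕ)) : Fin n → K))
        = v '' win a k' := by
    intro a k' h
    ext x
    constructor
    · rintro ⟨i, rfl⟩
      exact ⟨⟨a + (i : ℕ), by omega⟩,
        (show a ≤ a + (i : ℕ) ∧ a + (i : ℕ) < a + k' from by omega), rfl⟩
    · rintro ⟨i, ⟨h1, h2⟩, rfl⟩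
      have hval : a + ((i : ℕ) - a) = (i : ℕ) := by omega
      refine ⟨⟨(i : ℕ) - a, by omega⟩, ?_⟩
      simp only [v, Fin.val_mk, hval]
  have hmem_win : ∀ (a k' : ℕ) (h : a + k' ≤ n) (x : Fin n → K),
      x ∈ span K (v '' win a k') ↔
        ∃ e : Fin k' → K, ∑ i : Fin k', e i • v ⟨a + (i : ℕ), by omega⟩ = x := by
    intro a k' h x
    rw [← hwin_range a k' h]
    exact mem_span_range_iff_exists_fun K
  -- the codes as spans of windows
  have hrow0 : (fun i : Fin k => mooreMatrix q k g i)
      = fun i : Fin k => (fun j => g j ^ q ^ (0 + (i : ℕ)) : Fin n → K) := by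
    funext i j
    show g j ^ q ^ (i : ℕ) = g j ^ q ^ (0 + (i : ℕ))
    rw [zero_add]
  have hG : gabidulinCode q k g = span K (v '' win 0 k) := by
    rw [gabidulinCode, hrow0, hwin_range 0 k (by omega)]
  have hrowl : (fun i : Fin (k - l) => mooreMatrix q (k - l) (fun j => g j ^ q ^ l) i)
      = fun i : Fin (k - l) => (fun j => g j ^ q ^ (l + (i : ℕ)) : Fin n → K) := by
    funext i j
    show (g j ^ q ^ l) ^ q ^ (i : ℕ) = g j ^ q ^ (l + (i : ℕ))
    rw [← pow_mul, ← pow_add]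
  have hRHS : gabidulinCode q (k - l) (fun j => g j ^ q ^ l)
      = span K (v '' win l (k - l)) := by
    rw [gabidulinCode, hrowl, hwin_range l (k - l) (by omega)]
  -- Frobenius image computations
  have hF1 : ∀ c ∈ gabidulinCode q k g,
      (fun j => c j ^ q ^ l) ∈ span K (v '' win l k) := by
    intro c hc
    rw [hG, hmem_win 0 k (by omega)] at hc
    obtain ⟨b, hb⟩ := hc
    rw [hmem_win l k (by omega)]
    refine ⟨fun i => φ (b i), ?_⟩
    funext j
    rw [Finset.sum_apply]
    have hcj : c j = ∑ i : Fin k, b i * g j ^ q ^ (i : ℕ) := by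
      rw [← hb, Finset.sum_apply]
      refine Finset.sum_congr rfl fun i _ => ?_
      rw [Pi.smul_apply, smul_eq_mul]
      show b i * g j ^ q ^ (0 + (i : ℕ)) = b i * g j ^ q ^ (i : ℕ)
      rw [zero_add]
    rw [hcj, ← hφ, map_sum]
    refine Finset.sum_congr rfl fun i _ => ?_
    rw [Pi.smul_apply, smul_eq_mul, map_mul, hφ (b i), hφ (g j ^ q ^ (i : ℕ))]
    show φ (b i) * v ⟨l + (i : ℕ), by omega⟩ j = b i ^ q ^ l * (g j ^ q ^ (i : ℕ)) ^ q ^ l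
    rw [hφ]
    show b i ^ q ^ l * g j ^ q ^ (l + (i : ℕ)) = b i ^ q ^ l * (g j ^ q ^ (i : ℕ)) ^ q ^ l
    congr 1
    rw [← pow_mul, ← pow_add, Nat.add_comm (i : ℕ) l]
  have hF2 : ∀ (k' : ℕ), k' ≤ k → ∀ x ∈ span K (v '' win l k'),
      ∃ c ∈ gabidulinCode q k g, x = fun j => c j ^ q ^ l := by
    intro k' hk' x hx
    rw [hmem_win l k' (by omega)] at hx
    obtain ⟨e, he⟩ := hx
    refine ⟨∑ i : Fin k', ψ (e i) • v ⟨(i : ℕ), by omega⟩, ?_, ?_⟩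
    · rw [hG]
      refine Submodule.sum_mem _ fun i _ => Submodule.smul_mem _ _ ?_
      exact Submodule.subset_span ⟨⟨(i : ℕ), by omega⟩,
        (show 0 ≤ (i : ℕ) ∧ (i : ℕ) < 0 + k from by omega), rfl⟩
    · funext j
      rw [← congrFun he j, Finset.sum_apply, Finset.sum_apply, ← hφ, map_sum]
      refine Finset.sum_congr rfl fun i _ => ?_
      rw [Pi.smul_apply, Pi.smul_apply, smul_eq_mul, smul_eq_mul, map_mul, hψ, hφ]
      show e i * g j ^ q ^ (l + (i : ℕ)) = e i * (g j ^ q ^ (i : ℕ)) ^ q ^ l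
      congr 1
      rw [← pow_mul, ← pow_add, Nat.add_comm (i : ℕ) l]
  -- main equality
  ext x
  simp only [Set.mem_inter_iff, SetLike.mem_coe, Set.mem_setOf_eq]
  constructor
  · rintro ⟨hx1, c, hc, rfl⟩
    have hxs : (fun j => c j ^ q ^ l) ∈ span K (v '' win 0 k) := by rw [← hG]; exact hx1
    have hxt : (fun j => c j ^ q ^ l) ∈ span K (v '' win l k) := hF1 c hc
    have := mem_span_image_inter hv _ _ hxs hxt
    have hwineq : win 0 k ∩ win l k = win l (k - l) := by
      ext i
      simp only [win, Set.mem_inter_iff, Set.mem_setOf_eq]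
      omega
    rw [hwineq] at this
    rw [hRHS]
    exact this
  · intro hx
    rw [hRHS] at hx
    refine ⟨?_, ?_⟩
    · rw [hG]
      refine Submodule.span_mono (Set.image_mono ?_) hx
      intro i hi
      simp only [win, Set.mem_setOf_eq] at hi ⊢
      omega
    · obtain ⟨c, hc, hxc⟩ := hF2 (k - l) (by omega) x hx
      exact ⟨c, hc, hxc⟩
end

section
/- Let G be an [n,k] Gabidulin code over F_{q^m} with k < n, and let A = Mr_k(a) be a nonzero k×n Moore matrix all of whose rows are codewords of G. Then A has rank k and is therefore a generator matrix of G. -/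
open Polynomial Finset

/-- A nonzero `q`-polynomial of `q`-degree `< n` cannot vanish on `n` `F_q`-linearly
independent elements of a finite extension `K` of `F_q`. -/
lemma vanish' {Fq K : Type*} [Field Fq] [Fintype Fq] [Field K] [Algebra Fq K] [Fintype K]
    {n : ℕ} (g : Fin n → K) (hg : LinearIndependent Fq g) (c : ℕ → K)
    (h : ∀ j, ∑ r ∈ Finset.range n, c r * g j ^ Fintype.card Fq ^ r = 0) :
    ∀ r < n, c r = 0 := by
  set q := Fintype.card Fq with hqdef
  have hq2 : 2 ≤ q := Fintype.one_lt_card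
  intro r hrn
  by_contra hcr
  -- characteristic set-up
  set p := ringChar Fq with hpdef
  haveI : CharP Fq p := ringChar.charP Fq
  obtain ⟨e, hp, hqe⟩ := FiniteField.card Fq p
  haveI : Fact p.Prime := ⟨hp⟩
  haveI : CharP K p := charP_of_injective_algebraMap (algebraMap Fq K).injective p
  -- the q-polynomial
  set P : K[X] := ∑ t ∈ Finset.range n, C (c t) * X ^ q ^ t with hPdef
  have heval : ∀ x : K, P.eval x = ∑ t ∈ Finset.range n, c t * x ^ q ^ t := by
    intro x
    simp [hPdef, eval_finset_sum]
  have hco : P.coeff (q ^ r) = c r := by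
    rw [hPdef, finset_sum_coeff]
    rw [Finset.sum_eq_single r]
    · simp [coeff_C_mul, coeff_X_pow]
    · intro b _ hbr
      have hne : q ^ r ≠ q ^ b := fun hh => hbr ((Nat.pow_right_injective hq2 hh).symm)
      simp [coeff_C_mul, coeff_X_pow, hne]
    · intro hr'
      exact absurd (Finset.mem_range.2 hrn) hr'
  have hP0 : P ≠ 0 := fun h0 => hcr (by rw [← hco, h0, coeff_zero])
  have hdeg : P.natDegree ≤ q ^ (n - 1) := by
    apply natDegree_sum_le_of_forall_le
    intro t ht
    exact le_trans (natDegree_C_mul_X_pow_le _ _)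
      (Nat.pow_le_pow_right (by omega) (by have := Finset.mem_range.1 ht; omega))
  -- the Frobenius identity
  have hfrob : ∀ (x y : K) (t : ℕ), (x + y) ^ q ^ t = x ^ q ^ t + y ^ q ^ t := by
    intro x y t
    rw [hqdef, hqe, ← pow_mul p (↑e) t]
    exact add_pow_char_pow x y p (↑e * t)
  -- eval vanishes on the span
  have hroots : ∀ x ∈ Submodule.span Fq (Set.range g), P.eval x = 0 := by
    intro x hx
    refine Submodule.span_induction ?_ ?_ ?_ ?_ hx
    · rintro _ ⟨j, rfl⟩
      rw [heval]; exact h j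
    · rw [heval]
      refine Finset.sum_eq_zero fun t _ => ?_
      rw [zero_pow (pow_ne_zero t (by omega : q ≠ 0)), mul_zero]
    · intro x y _ _ ihx ihy
      rw [heval] at ihx ihy ⊢
      have : ∀ t ∈ Finset.range n, c t * (x + y) ^ q ^ t
          = c t * x ^ q ^ t + c t * y ^ q ^ t := by
        intro t _
        rw [hfrob, mul_add]
      rw [Finset.sum_congr rfl this, Finset.sum_add_distrib, ihx, ihy, add_zero]
    · intro s x _ ihx
      rw [heval] at ihx ⊢
      have : ∀ t ∈ Finset.range n, c t * (s • x) ^ q ^ t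
          = algebraMap Fq K s * (c t * x ^ q ^ t) := by
        intro t _
        rw [Algebra.smul_def, mul_pow, ← map_pow, FiniteField.pow_card_pow]
        ring
      rw [Finset.sum_congr rfl this, ← Finset.mul_sum, ihx, mul_zero]
  -- cardinality contradiction
  classical
  set S := Submodule.span Fq (Set.range g) with hSdef
  haveI : Fintype S := Fintype.ofFinite _
  have hcardS : Fintype.card S = q ^ n := by
    rw [Module.card_eq_pow_finrank (K := Fq) (V := S), hSdef, finrank_span_eq_card hg,
      Fintype.card_fin]
  have hsub : (S : Set K).toFinset ⊆ P.roots.toFinset := by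
    intro x hx
    rw [Set.mem_toFinset] at hx
    rw [Multiset.mem_toFinset, Polynomial.mem_roots hP0]
    exact hroots x hx
  have hle : q ^ n ≤ q ^ (n - 1) := by
    calc q ^ n = Fintype.card S := hcardS.symm
    _ = (S : Set K).toFinset.card := (Set.toFinset_card _).symm
    _ ≤ P.roots.toFinset.card := Finset.card_le_card hsub
    _ ≤ Multiset.card P.roots := Multiset.toFinset_card_le _
    _ ≤ P.natDegree := Polynomial.card_roots' P
    _ ≤ q ^ (n - 1) := hdeg
  exact absurd hle (not_le.2 (Nat.pow_lt_pow_right (by omega) (by omega)))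

/-- Let `G` be an `[n,k]` Gabidulin code over `F_{q^m}` with `k < n`, and let `A = Mr_k(a)` be
a nonzero `k × n` Moore matrix all of whose rows are codewords of `G`.  Then `A` has rank `k`
and is therefore a generator matrix of `G`. -/
theorem moore_rows_in_gabidulin (Fq K : Type*) [Field Fq] [Fintype Fq] [Field K]
    [Algebra Fq K] [Fintype K] (m n k : ℕ)
    (hcard : Fintype.card K = Fintype.card Fq ^ m)
    (hk : 0 < k) (hkn : k < n) (hnm : n ≤ m)
    (g : Fin n → K) (hg : LinearIndependent Fq g)
    (a : Fin n → K) (hA : mooreMatrix (Fintype.card Fq) k a ≠ 0)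
    (hrows : ∀ i : Fin k,
      mooreMatrix (Fintype.card Fq) k a i ∈ gabidulinCode (Fintype.card Fq) k g) :
    (mooreMatrix (Fintype.card Fq) k a).rank = k ∧
    Submodule.span K (Set.range fun i => mooreMatrix (Fintype.card Fq) k a i)
      = gabidulinCode (Fintype.card Fq) k g := by
  classical
  set q := Fintype.card Fq with hqdef
  have hq2 : 2 ≤ q := Fintype.one_lt_card
  -- characteristic set-up
  set p := ringChar Fq with hpdef
  haveI : CharP Fq p := ringChar.charP Fq
  obtain ⟨e, hp, hqe⟩ := FiniteField.card Fq p
  haveI : Fact p.Prime := ⟨hp⟩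
  haveI : CharP K p := charP_of_injective_algebraMap (algebraMap Fq K).injective p
  -- q^s-th power is a ring hom
  have hfrobsum : ∀ (F : ℕ → K) (s : ℕ) (T : Finset ℕ),
      (∑ t ∈ T, F t) ^ q ^ s = ∑ t ∈ T, F t ^ q ^ s := by
    intro F s T
    have hqs : q ^ s = p ^ ((e : ℕ) * s) := by rw [hqdef, hqe, ← pow_mul]
    rw [hqs]
    have hm := map_sum (iterateFrobenius K p ((e : ℕ) * s)) F T
    simp only [iterateFrobenius_def] at hm
    exact hm
  -- coefficients of each row of A as a codeword
  have hex : ∀ s : Fin k, ∃ L : Fin k → K,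
      ∀ j, ∑ t : Fin k, L t * g j ^ q ^ (t : ℕ) = a j ^ q ^ (s : ℕ) := by
    intro s
    have hmem := hrows s
    rw [gabidulinCode] at hmem
    obtain ⟨L, hL⟩ := (Submodule.mem_span_range_iff_exists_fun K).1 hmem
    refine ⟨L, fun j => ?_⟩
    have := congrFun hL j
    simpa [mooreMatrix, Finset.sum_apply, Pi.smul_apply, smul_eq_mul] using this
  choose L hL using hex
  -- padded coefficient functions
  set Lp : Fin k → ℕ → K := fun s t => if h : t < k then L s ⟨t, h⟩ else 0 with hLpdef
  have hpadzero : ∀ (s : Fin k) (t : ℕ), k ≤ t → Lp s t = 0 := by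
    intro s t ht
    rw [hLpdef]
    exact dif_neg (by omega)
  have hLp : ∀ (s : Fin k) (j : Fin n),
      ∑ t ∈ Finset.range n, Lp s t * g j ^ q ^ t = a j ^ q ^ (s : ℕ) := by
    intro s j
    rw [← Finset.sum_subset (Finset.range_subset_range.2 (le_of_lt hkn))
      (fun t _ htk => by
        rw [hpadzero s t (by simpa using htk), zero_mul])]
    rw [← Fin.sum_univ_eq_sum_range (fun t => Lp s t * g j ^ q ^ t) k]
    rw [← hL s j]
    refine Finset.sum_congr rfl fun t _ => ?_
    rw [hLpdef]
    simp [t.isLt]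
  set lam : ℕ → K := Lp ⟨0, hk⟩ with hlamdef
  have ha : ∀ j, ∑ t ∈ Finset.range n, lam t * g j ^ q ^ t = a j := by
    intro j
    have := hLp ⟨0, hk⟩ j
    simpa using this
  -- the key step: downward induction kills all higher coefficients
  have step : ∀ i : ℕ, 1 ≤ i → i < k → (∀ t, i < t → lam t = 0) → lam i = 0 := by
    intro i h1 hik hup
    set s := min (k - 1) (n - 1 - i) with hsdef
    have hs1 : 1 ≤ s := by omega
    have hsk : s < k := by omega
    have hsn : s + i < n := by omega
    have hks : k ≤ s + i := by omega
    set mu : ℕ → K := Lp ⟨s, hsk⟩ with hmudef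
    set c : ℕ → K := fun r => (if s ≤ r then lam (r - s) ^ q ^ s else 0) - mu r with hcdef
    have hsum : ∀ j, ∑ r ∈ Finset.range n, c r * g j ^ q ^ r = 0 := by
      intro j
      have hsplit : ∑ r ∈ Finset.range n, c r * g j ^ q ^ r
          = (∑ r ∈ Finset.range n, (if s ≤ r then lam (r - s) ^ q ^ s else 0) * g j ^ q ^ r)
            - ∑ r ∈ Finset.range n, mu r * g j ^ q ^ r := by
        rw [← Finset.sum_sub_distrib]
        exact Finset.sum_congr rfl fun r _ => by rw [hcdef, sub_mul]
      have h1sum : ∑ r ∈ Finset.range n, (if s ≤ r then lam (r - s) ^ q ^ s else 0) * g j ^ q ^ r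
          = ∑ t ∈ Finset.range (n - s), lam t ^ q ^ s * g j ^ q ^ (s + t) := by
        rw [← Finset.sum_subset (show Finset.Ico s n ⊆ Finset.range n by
            intro x hx; rw [Finset.mem_range]; exact (Finset.mem_Ico.1 hx).2)
          (fun x _ hxs => by
            rw [if_neg (fun hle => hxs (Finset.mem_Ico.2 ⟨hle, by
              simpa using (by assumption : x ∈ Finset.range n)⟩)), zero_mul])]
        rw [Finset.sum_Ico_eq_sum_range]
        refine Finset.sum_congr rfl fun t _ => ?_
        rw [if_pos (Nat.le_add_right s t), Nat.add_sub_cancel_left]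
      have h2sum : ∑ t ∈ Finset.range (n - s), lam t ^ q ^ s * g j ^ q ^ (s + t)
          = ∑ t ∈ Finset.range n, lam t ^ q ^ s * g j ^ q ^ (s + t) := by
        refine Finset.sum_subset (Finset.range_subset_range.2 (by omega)) fun t _ hts => ?_
        rw [hup t (by simp only [Finset.mem_range, not_lt] at hts; omega),
          zero_pow (pow_ne_zero s (by omega : q ≠ 0)), zero_mul]
      have h3sum : ∑ t ∈ Finset.range n, lam t ^ q ^ s * g j ^ q ^ (s + t) = a j ^ q ^ s := by
        have hterm : ∀ t ∈ Finset.range n,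
            lam t ^ q ^ s * g j ^ q ^ (s + t) = (lam t * g j ^ q ^ t) ^ q ^ s := by
          intro t _
          rw [mul_pow, ← pow_mul, ← pow_add, add_comm t s]
        rw [Finset.sum_congr rfl hterm, ← hfrobsum, ha j]
      rw [hsplit, h1sum, h2sum, h3sum]
      have := hLp ⟨s, hsk⟩ j
      simp only [hmudef] at this ⊢
      rw [this]
      simp
    have hc0 := vanish' g hg c (by simpa [hqdef] using hsum) (s + i) hsn
    have hmu0 : mu (s + i) = 0 := hpadzero ⟨s, hsk⟩ (s + i) hks
    rw [hcdef] at hc0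
    simp only [hmu0, if_pos (Nat.le_add_right s i), Nat.add_sub_cancel_left, sub_zero] at hc0
    exact pow_eq_zero_iff (pow_ne_zero s (by omega : q ≠ 0)) |>.1 hc0
  have hlam : ∀ t, 1 ≤ t → lam t = 0 := by
    have key : ∀ d : ℕ, ∀ t, k ≤ t + d → 1 ≤ t → lam t = 0 := by
      intro d
      induction d with
      | zero => intro t ht _; exact hpadzero _ t (by omega)
      | succ d ih =>
        intro t ht h1
        by_cases htk : t < k
        · exact step t h1 htk fun t' ht' => ih t' (by omega) (by omega)
        · exact hpadzero _ t (by omega)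
    intro t h1
    exact key k t (by omega) h1
  have ha0 : ∀ j, a j = lam 0 * g j := by
    intro j
    rw [← ha j, Finset.sum_eq_single 0]
    · simp
    · intro b _ hb
      rw [hlam b (by omega), zero_mul]
    · intro h0
      exact absurd (Finset.mem_range.2 (by omega : 0 < n)) h0
  have hl0 : lam 0 ≠ 0 := by
    intro h0
    apply hA
    ext i j
    rw [mooreMatrix, Matrix.of_apply, ha0 j, h0, zero_mul,
      zero_pow (pow_ne_zero _ (by omega : q ≠ 0)), Matrix.zero_apply]
  have hga : LinearIndependent Fq a := by
    have heq : a = (LinearMap.mulLeft Fq (lam 0)) ∘ g := funext fun j => ha0 j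
    rw [heq]
    exact hg.map' _ (LinearMap.ker_eq_bot.2 (mul_right_injective₀ hl0))
  -- rows of the Moore matrix of a are linearly independent
  have hrowind : LinearIndependent K (mooreMatrix q k a) := by
    refine Fintype.linearIndependent_iff.2 ?_
    intro cc hcc i
    set cp : ℕ → K := fun r => if h : r < k then cc ⟨r, h⟩ else 0 with hcpdef
    have hcomp : ∀ j, ∑ r ∈ Finset.range n, cp r * a j ^ q ^ r = 0 := by
      intro j
      rw [← Finset.sum_subset (Finset.range_subset_range.2 (le_of_lt hkn))
        (fun t _ htk => by
          simp only [Finset.mem_range, not_lt] at htk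
          show (if h : t < k then cc ⟨t, h⟩ else 0) * a j ^ q ^ t = 0
          rw [dif_neg (by omega), zero_mul])]
      rw [← Fin.sum_univ_eq_sum_range (fun t => cp t * a j ^ q ^ t) k]
      have := congrFun hcc j
      simp only [Finset.sum_apply, Pi.smul_apply, smul_eq_mul, Pi.zero_apply] at this
      rw [← this]
      refine Finset.sum_congr rfl fun t _ => ?_
      rw [hcpdef]
      simp [mooreMatrix, t.isLt]
    have := vanish' a hga cp (by simpa [hqdef] using hcomp) i (lt_trans i.isLt hkn)
    simp only [hcpdef] at this
    simpa [i.isLt] using this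
  have hrank : (mooreMatrix q k a).rank = k := by
    exact hrowind.rank_matrix.trans (Fintype.card_fin k)
  -- row spaces coincide
  have hrow_eq : ∀ i : Fin k,
      mooreMatrix q k a i = (lam 0 ^ q ^ (i : ℕ)) • mooreMatrix q k g i := by
    intro i
    funext j
    simp only [mooreMatrix, Matrix.of_apply, Pi.smul_apply, smul_eq_mul]
    rw [ha0 j, mul_pow]
  have hspan : Submodule.span K (Set.range fun i => mooreMatrix q k a i)
      = gabidulinCode q k g := by
    rw [gabidulinCode]
    apply le_antisymm
    · rw [Submodule.span_le]
      rintro _ ⟨i, rfl⟩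
      show mooreMatrix q k a i ∈ (Submodule.span K (Set.range fun i => mooreMatrix q k g i) : Set _)
      rw [hrow_eq i]
      exact Submodule.smul_mem _ _ (Submodule.subset_span ⟨i, rfl⟩)
    · rw [Submodule.span_le]
      rintro _ ⟨i, rfl⟩
      have hne : lam 0 ^ q ^ (i : ℕ) ≠ 0 := pow_ne_zero _ hl0
      have : mooreMatrix q k g i = (lam 0 ^ q ^ (i : ℕ))⁻¹ • mooreMatrix q k a i := by
        rw [hrow_eq i, smul_smul, inv_mul_cancel₀ hne, one_smul]
      show mooreMatrix q k g i ∈ (Submodule.span K (Set.range fun i => mooreMatrix q k a i) : Set _)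
      rw [this]
      exact Submodule.smul_mem _ _ (Submodule.subset_span ⟨i, rfl⟩)
  exact ⟨hrank, hspan⟩
end

section
/- Let G = Gab_{n,k}(g) be an [n,k] Gabidulin code over F_{q^m} with generating vector g, where k < n ≤ m. A codeword g' ∈ G is a generating vector of G (i.e., Gab_{n,k}(g') = G and g' has F_q-linearly independent components) if and only if g' = γ g for some nonzero γ ∈ F_{q^m}. -/
section Aux

open Polynomial in
/-- Rows of the Moore matrix (with `r` rows) of an `F_q`-linearly independent vector are
linearly independent over the big field, provided `r ≤ n`. -/
lemma moore_rows_linearIndependent (Fq K : Type*) [Field Fq] [Fintype Fq] [Field K]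
    [Algebra Fq K] [Fintype K] (n r : ℕ)
    (hrn : r ≤ n)
    (g : Fin n → K) (hg : LinearIndependent Fq g) :
    LinearIndependent K (fun i : Fin r => fun j => g j ^ Fintype.card Fq ^ (i : ℕ)) := by
  set q := Fintype.card Fq with hqdef
  have hq1 : 1 < q := Fintype.one_lt_card
  have hp : (ringChar Fq).Prime := CharP.char_is_prime Fq _
  obtain ⟨e, -, hqe⟩ := FiniteField.card Fq (ringChar Fq)
  haveI : CharP K (ringChar Fq) :=
    charP_of_injective_algebraMap (algebraMap Fq K).injective _
  haveI : ExpChar K (ringChar Fq) := ExpChar.prime hp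
  set p := ringChar Fq
  classical
  rw [Fintype.linearIndependent_iff]
  intro c hc
  by_contra hne
  push_neg at hne
  obtain ⟨i₀, hi₀⟩ := hne
  set P : K[X] := ∑ i : Fin r, C (c i) * X ^ (q ^ (i : ℕ)) with hP
  have hcoeff : ∀ i : Fin r, P.coeff (q ^ (i : ℕ)) = c i := by
    intro i
    rw [hP, Polynomial.finset_sum_coeff]
    rw [Finset.sum_eq_single i]
    · simp
    · intro b _ hb
      rw [coeff_C_mul, coeff_X_pow, if_neg, mul_zero]
      intro h
      exact hb (Fin.ext (Nat.pow_right_injective hq1 h.symm))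
    · simp
  have hPne : P ≠ 0 := fun h => hi₀ (by rw [← hcoeff i₀, h, coeff_zero])
  have hroot : ∀ a : Fin n → Fq, P.IsRoot (∑ j, a j • g j) := by
    intro a
    have key : ∀ i : Fin r, (∑ j, a j • g j) ^ q ^ (i : ℕ) = ∑ j, a j • g j ^ q ^ (i : ℕ) := by
      intro i
      have hqpow : q ^ (i : ℕ) = p ^ (e * (i : ℕ)) := by
        rw [hqdef, hqe, ← pow_mul]
      rw [hqpow, sum_pow_char_pow]
      refine Finset.sum_congr rfl fun j _ => ?_
      rw [Algebra.smul_def, Algebra.smul_def, mul_pow, ← map_pow, ← hqpow,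
        FiniteField.pow_card_pow]
    simp only [IsRoot, hP, eval_finset_sum, eval_mul, eval_C, eval_pow, eval_X]
    calc ∑ i : Fin r, c i * (∑ j, a j • g j) ^ q ^ (i : ℕ)
        = ∑ i : Fin r, ∑ j, a j • (c i * g j ^ q ^ (i : ℕ)) := by
          refine Finset.sum_congr rfl fun i _ => ?_
          rw [key i, Finset.mul_sum]
          refine Finset.sum_congr rfl fun j _ => ?_
          rw [Algebra.smul_def, Algebra.smul_def]; ring
      _ = ∑ j, a j • (∑ i : Fin r, c i * g j ^ q ^ (i : ℕ)) := by
          rw [Finset.sum_comm]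
          refine Finset.sum_congr rfl fun j _ => ?_
          rw [Finset.smul_sum]
      _ = 0 := by
          refine Finset.sum_eq_zero fun j _ => ?_
          have := congrFun hc j
          simp only [Finset.sum_apply, Pi.smul_apply, Pi.zero_apply, smul_eq_mul] at this
          rw [this]; simp
  have hinj : Function.Injective (fun a : Fin n → Fq => ∑ j, a j • g j) := by
    intro a b hab
    have h1 : ∑ j, (a j - b j) • g j = 0 := by
      simp only [sub_smul, Finset.sum_sub_distrib, hab, sub_self]
    have h2 := (Fintype.linearIndependent_iff.mp hg) _ h1
    funext j; exact sub_eq_zero.mp (h2 j)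
  have hsub : (Finset.univ.image fun a : Fin n → Fq => ∑ j, a j • g j) ⊆ P.roots.toFinset := by
    intro x hx
    obtain ⟨a, -, rfl⟩ := Finset.mem_image.mp hx
    rw [Multiset.mem_toFinset, Polynomial.mem_roots hPne]
    exact hroot a
  have hcard1 : q ^ n ≤ P.natDegree := by
    calc q ^ n = (Finset.univ.image fun a : Fin n → Fq => ∑ j, a j • g j).card := by
          rw [Finset.card_image_of_injective _ hinj, Finset.card_univ, Fintype.card_fun]
          simp [hqdef]
      _ ≤ P.roots.toFinset.card := Finset.card_le_card hsub
      _ ≤ Multiset.card P.roots := P.roots.toFinset_card_le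
      _ ≤ P.natDegree := P.card_roots'
  have hcard2 : P.natDegree ≤ q ^ (r - 1) := by
    refine le_trans (Polynomial.natDegree_sum_le _ _) ?_
    rw [Finset.fold_max_le]
    refine ⟨Nat.zero_le _, fun i _ => ?_⟩
    calc (Polynomial.natDegree ∘ fun i : Fin r => Polynomial.C (c i) * Polynomial.X ^ q ^ (i : ℕ)) i
        ≤ q ^ (i : ℕ) := Polynomial.natDegree_C_mul_X_pow_le _ _
      _ ≤ q ^ (r - 1) := Nat.pow_le_pow_right (by omega) (by omega)
  have hle : q ^ n ≤ q ^ (r - 1) := hcard1.trans hcard2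
  have hnr : n ≤ r - 1 := (Nat.pow_le_pow_iff_right hq1).mp hle
  have hr : 0 < r := i₀.pos
  omega

lemma linindep_span_image_inter {K M ι : Type*} [DivisionRing K] [AddCommGroup M] [Module K M]
    {v : ι → M} (hv : LinearIndependent K v) (s t : Set ι) :
    Submodule.span K (v '' s) ⊓ Submodule.span K (v '' t)
      = Submodule.span K (v '' (s ∩ t)) := by
  refine le_antisymm ?_ (le_inf
    (Submodule.span_mono (Set.image_mono Set.inter_subset_left))
    (Submodule.span_mono (Set.image_mono Set.inter_subset_right)))
  intro x hx
  obtain ⟨hxs, hxt⟩ := Submodule.mem_inf.mp hx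
  rw [Finsupp.mem_span_image_iff_linearCombination] at hxs hxt ⊢
  obtain ⟨l, hl, rfl⟩ := hxs
  obtain ⟨l', hl', he⟩ := hxt
  have hll : l' = l := hv he
  refine ⟨l, ?_, rfl⟩
  rw [Finsupp.mem_supported] at hl hl' ⊢
  rw [hll] at hl'
  exact Set.subset_inter hl hl'

variable {K : Type*} [Field K] [Fintype K] (p e : ℕ) [ExpChar K p]

instance frobSurjective : RingHomSurjective (iterateFrobenius K p e) :=
  ⟨Finite.injective_iff_surjective.mp (iterateFrobenius K p e).injective⟩

/-- Componentwise `q`-power Frobenius on `K^n`, as a semilinear map. -/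
def frobSemilinear (n : ℕ) : (Fin n → K) →ₛₗ[iterateFrobenius K p e] (Fin n → K) where
  toFun v := fun j => iterateFrobenius K p e (v j)
  map_add' u v := funext fun j => map_add _ _ _
  map_smul' c v := funext fun j => map_mul _ _ _

/-- The intrinsic chain of subspaces `W_0 = C`, `W_{j+1} = W_j ⊓ Φ(W_j)`. -/
def frobChain (n : ℕ) (C : Submodule K (Fin n → K)) : ℕ → Submodule K (Fin n → K)
  | 0 => C
  | j + 1 => frobChain n C j ⊓ Submodule.map (frobSemilinear p e n) (frobChain n C j)

end Aux

lemma frobChain_gabidulin (Fq K : Type*) [Field Fq] [Fintype Fq] [Field K]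
    [Algebra Fq K] [Fintype K] (n k p e : ℕ) [ExpChar K p]
    (hq : Fintype.card Fq = p ^ e) (hk : 0 < k) (hkn : k < n)
    (u : Fin n → K) (hu : LinearIndependent Fq u) (j : ℕ) (hj : j ≤ k - 1) :
    frobChain p e n (gabidulinCode (Fintype.card Fq) k u) j
      = Submodule.span K ((fun i : Fin (k+1) => fun jj => u jj ^ Fintype.card Fq ^ (i : ℕ)) ''
          {i : Fin (k+1) | j ≤ (i : ℕ) ∧ (i : ℕ) < k}) := by
  set q := Fintype.card Fq with hqdef
  set v : Fin (k+1) → (Fin n → K) := fun i => fun jj => u jj ^ q ^ (i : ℕ) with hvdef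
  have hv : LinearIndependent K v :=
    moore_rows_linearIndependent Fq K n (k+1) (by omega) u hu
  have hΦv : ∀ i : Fin (k+1), ∀ h : (i : ℕ) + 1 < k + 1,
      (frobSemilinear p e n) (v i) = v ⟨(i : ℕ) + 1, h⟩ := by
    intro i hi
    funext jj
    show iterateFrobenius K p e (u jj ^ q ^ (i : ℕ)) = u jj ^ q ^ ((i : ℕ) + 1)
    rw [iterateFrobenius_def, ← pow_mul, ← hq, ← pow_succ]
  have hΦimg : ∀ a : ℕ,
      (⇑(frobSemilinear p e n) '' (v '' {i : Fin (k+1) | a ≤ (i : ℕ) ∧ (i : ℕ) < k}))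
        = v '' {i : Fin (k+1) | a + 1 ≤ (i : ℕ)} := by
    intro a
    ext x
    constructor
    · rintro ⟨y, ⟨i, hi, rfl⟩, rfl⟩
      obtain ⟨hi1, hi2⟩ := hi
      exact ⟨⟨(i : ℕ) + 1, by omega⟩, by simp; omega, (hΦv i (by omega)).symm⟩
    · rintro ⟨i, hi, rfl⟩
      have hi' : a + 1 ≤ (i : ℕ) := hi
      have hik : (i : ℕ) < k + 1 := i.isLt
      refine ⟨v ⟨(i : ℕ) - 1, by omega⟩, ⟨⟨(i : ℕ) - 1, by omega⟩, by simp; omega, rfl⟩, ?_⟩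
      rw [hΦv ⟨(i : ℕ) - 1, by omega⟩ (by show (i : ℕ) - 1 + 1 < k + 1; omega)]
      exact congrArg v (Fin.ext (by show (i : ℕ) - 1 + 1 = (i : ℕ); omega))
  induction j with
  | zero =>
    show gabidulinCode q k u = _
    unfold gabidulinCode
    congr 1
    ext x
    constructor
    · rintro ⟨i, rfl⟩
      exact ⟨⟨(i : ℕ), by have := i.isLt; omega⟩, by simp [i.isLt], rfl⟩
    · rintro ⟨i, ⟨-, hik⟩, rfl⟩
      exact ⟨⟨(i : ℕ), hik⟩, rfl⟩
  | succ j ih =>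
    have ihj := ih (by omega)
    show frobChain p e n _ j ⊓ Submodule.map (frobSemilinear p e n) (frobChain p e n _ j) = _
    rw [ihj, Submodule.map_span, hΦimg j, linindep_span_image_inter hv]
    congr 1
    refine congrArg (Set.image v) ?_
    ext i
    show (j ≤ (i : ℕ) ∧ (i : ℕ) < k) ∧ j + 1 ≤ (i : ℕ) ↔ j + 1 ≤ (i : ℕ) ∧ (i : ℕ) < k
    omega


/-- Let `G = Gab_{n,k}(g)` be an `[n,k]` Gabidulin code over `F_{q^m}` with generating vector
`g`, where `k < n ≤ m`.  A codeword `g' ∈ G` is a generating vector of `G` if and only if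
`g' = γ g` for some nonzero `γ ∈ F_{q^m}`. -/
theorem gabidulin_generating_vectors (Fq K : Type*) [Field Fq] [Fintype Fq] [Field K]
    [Algebra Fq K] [Fintype K] (m n k : ℕ)
    (hcard : Fintype.card K = Fintype.card Fq ^ m)
    (hk : 0 < k) (hkn : k < n) (hnm : n ≤ m)
    (g : Fin n → K) (hg : LinearIndependent Fq g)
    (g' : Fin n → K) (hg' : g' ∈ gabidulinCode (Fintype.card Fq) k g) :
    (LinearIndependent Fq g' ∧
        gabidulinCode (Fintype.card Fq) k g' = gabidulinCode (Fintype.card Fq) k g)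
      ↔ ∃ γ : K, γ ≠ 0 ∧ g' = γ • g := by
  constructor
  · rintro ⟨hli', hEq⟩
    have hp : (ringChar Fq).Prime := CharP.char_is_prime Fq _
    obtain ⟨e, -, hqe⟩ := FiniteField.card Fq (ringChar Fq)
    haveI : CharP K (ringChar Fq) :=
      charP_of_injective_algebraMap (algebraMap Fq K).injective _
    haveI : ExpChar K (ringChar Fq) := ExpChar.prime hp
    set p := ringChar Fq
    have h1 := frobChain_gabidulin Fq K n k p e hqe hk hkn g hg (k-1) le_rfl
    have h2 := frobChain_gabidulin Fq K n k p e hqe hk hkn g' hli' (k-1) le_rfl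
    rw [hEq] at h2
    have hset : ∀ u : Fin n → K,
        ((fun i : Fin (k+1) => fun jj => u jj ^ Fintype.card Fq ^ (i : ℕ)) ''
            {i : Fin (k+1) | k - 1 ≤ (i : ℕ) ∧ (i : ℕ) < k})
          = {fun jj => u jj ^ Fintype.card Fq ^ (k-1)} := by
      intro u
      have hs : {i : Fin (k+1) | k - 1 ≤ (i : ℕ) ∧ (i : ℕ) < k}
          = {(⟨k-1, by omega⟩ : Fin (k+1))} := by
        ext i
        simp only [Set.mem_setOf_eq, Set.mem_singleton_iff]
        constructor
        · rintro ⟨ha, hb⟩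
          exact Fin.ext (by show (i : ℕ) = k - 1; omega)
        · rintro rfl
          show k - 1 ≤ k - 1 ∧ k - 1 < k
          omega
      rw [hs, Set.image_singleton]
    rw [hset g] at h1
    rw [hset g'] at h2
    have hmem : (fun jj => g' jj ^ Fintype.card Fq ^ (k-1))
        ∈ Submodule.span K {(fun jj => g jj ^ Fintype.card Fq ^ (k-1) : Fin n → K)} := by
      rw [← h1, h2]
      exact Submodule.mem_span_singleton_self _
    obtain ⟨c, hc⟩ := Submodule.mem_span_singleton.mp hmem
    have hc0 : c ≠ 0 := by
      rintro rfl
      have hz := congrFun hc ⟨0, by omega⟩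
      simp only [Pi.smul_apply, smul_eq_mul, zero_mul, zero_smul, Pi.zero_apply] at hz
      exact (pow_ne_zero _ (hli'.ne_zero ⟨0, by omega⟩)) hz.symm
    have hτi : Function.Injective (iterateFrobenius K p (e * (k-1))) :=
      RingHom.injective _
    obtain ⟨d, hd⟩ := Finite.injective_iff_surjective.mp hτi c
    have hqpow : Fintype.card Fq ^ (k-1) = p ^ ((e : ℕ) * (k-1)) := by
      rw [hqe, ← pow_mul]
    have hdq : d ^ Fintype.card Fq ^ (k-1) = c := by
      rw [hqpow, ← iterateFrobenius_def, hd]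
    have hd0 : d ≠ 0 := by
      rintro rfl
      apply hc0
      rw [← hdq, zero_pow (pow_ne_zero _ (by have := Fintype.one_lt_card (α := Fq); omega))]
    refine ⟨d, hd0, ?_⟩
    funext jj
    have hjj := congrFun hc jj
    simp only [Pi.smul_apply, smul_eq_mul] at hjj
    apply hτi
    rw [iterateFrobenius_def, iterateFrobenius_def, ← hqpow]
    show g' jj ^ Fintype.card Fq ^ (k-1) = (d • g) jj ^ Fintype.card Fq ^ (k-1)
    rw [Pi.smul_apply, smul_eq_mul, mul_pow, hdq, hjj]
  · rintro ⟨γ, hγ, rfl⟩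
    constructor
    · have hcomp : (γ • g) = ⇑((LinearMap.mulLeft K γ).restrictScalars Fq) ∘ g :=
        funext fun j => rfl
      rw [hcomp]
      refine hg.map' _ (LinearMap.ker_eq_bot.mpr fun a b hab => ?_)
      exact mul_left_cancel₀ hγ hab
    · have hrow : ∀ i : Fin k, mooreMatrix (Fintype.card Fq) k (γ • g) i
          = (γ ^ Fintype.card Fq ^ (i : ℕ)) • mooreMatrix (Fintype.card Fq) k g i := by
        intro i
        funext j
        show (γ • g) j ^ Fintype.card Fq ^ (i : ℕ) = _
        rw [Pi.smul_apply, smul_eq_mul, mul_pow]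
        rfl
      unfold gabidulinCode
      apply le_antisymm
      · rw [Submodule.span_le]
        rintro x ⟨i, rfl⟩
        show mooreMatrix (Fintype.card Fq) k (γ • g) i ∈ _
        rw [hrow i]
        exact Submodule.smul_mem _ _ (Submodule.subset_span ⟨i, rfl⟩)
      · rw [Submodule.span_le]
        rintro x ⟨i, rfl⟩
        show mooreMatrix (Fintype.card Fq) k g i ∈ _
        have : mooreMatrix (Fintype.card Fq) k g i
            = (γ ^ Fintype.card Fq ^ (i : ℕ))⁻¹ • mooreMatrix (Fintype.card Fq) k (γ • g) i := by
          rw [hrow i, smul_smul, inv_mul_cancel₀ (pow_ne_zero _ hγ), one_smul]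
        rw [this]
        exact Submodule.smul_mem _ _ (Submodule.subset_span ⟨i, rfl⟩)
end
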